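/- There exists an absolute constant c₀ > 0 with the following property. Let s ≥ 2 and 1 ≤ a < b be integers, let 𝒟 ⊆ {0,1,…,s−1} be a digit set with {0,1} ⊆ 𝒟 and r := #𝒟, and let ξ ∈ ℤ ∖ {0} with base-s digits d_j(|ξ|). Set J̄ := #{ a ≤ j ≤ b−1 : 1 ≤ d_{j−1}(|ξ|) + d_j(|ξ|)·s ≤ s² − 2 }. Then |𝔅*(ξ)| ≤ (1 − c₀/(r s⁴))^{J̄} and |ℭ(ξ)| ≤ (1 − c₀/s⁵)^{J̄}. -/

import Mathlib

open Finset

/-- `e(y) = exp(-2πi y)`. -/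
noncomputable def eneg (y : ℝ) : ℂ := Complex.exp (-(2 * Real.pi * Complex.I * (y : ℂ)))

/-- `1̂(θ) = ∫₀¹ e(xθ) dx`. -/
noncomputable def oneHat (θ : ℝ) : ℂ := ∫ x in (0:ℝ)..1, eneg (x * θ)

/-- The `j`-th base-`s` digit of the natural number `n`. -/
def digitOf (s n j : ℕ) : ℕ := n / s ^ j % s

/-- `𝔄(ξ; N, s, a) = N⁻¹ Σ_{k<N} e(ξ k s^{-a})`. -/
noncomputable def Afun (N s a : ℕ) (ξ : ℤ) : ℂ :=
  (N : ℂ)⁻¹ * ∑ k ∈ Finset.range N, eneg ((ξ : ℝ) * k / (s : ℝ) ^ a)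

/-- `ℭ(ξ) = s^{a-b} Σ_{ℓ < s^{b-a}} e(ξ ℓ s^{-b})`. -/
noncomputable def Cfun (s a b : ℕ) (ξ : ℤ) : ℂ :=
  (((s : ℝ) ^ a / (s : ℝ) ^ b : ℝ) : ℂ) *
    ∑ ℓ ∈ Finset.range (s ^ (b - a)), eneg ((ξ : ℝ) * ℓ / (s : ℝ) ^ b)

/-- `𝕃*`: the set of `ℓ < s^{b-a}` all of whose `b-a` base-`s` digits lie in `D`. -/
def Lstar (s a b : ℕ) (D : Finset ℕ) : Finset ℕ :=
  (Finset.range (s ^ (b - a))).filter fun ℓ => ∀ j < b - a, digitOf s ℓ j ∈ D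

/-- `𝔅*(ξ) = r^{a-b} Σ_{ℓ ∈ 𝕃*} e(ξ ℓ s^{-b})`, where `r = #D`. -/
noncomputable def Bstar (s a b : ℕ) (D : Finset ℕ) (ξ : ℤ) : ℂ :=
  (((D.card : ℝ) ^ a / (D.card : ℝ) ^ b : ℝ) : ℂ) *
    ∑ ℓ ∈ Lstar s a b D, eneg ((ξ : ℝ) * ℓ / (s : ℝ) ^ b)

/-- `g(ξ, k; s, 𝒜) = (#𝒜)⁻¹ Σ_{d ∈ 𝒜} e(ξ d s^{-k})`. -/
noncomputable def gfun (s : ℕ) (A : Finset ℕ) (ξ : ℤ) (k : ℕ) : ℂ :=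
  (A.card : ℂ)⁻¹ * ∑ d ∈ A, eneg ((ξ : ℝ) * d / (s : ℝ) ^ k)

lemma eneg_add (x y : ℝ) : eneg (x + y) = eneg x * eneg y := by
  rw [eneg, eneg, eneg, ← Complex.exp_add]; push_cast; ring_nf

lemma norm_eneg (x : ℝ) : ‖eneg x‖ = 1 := by
  rw [eneg, Complex.norm_exp]
  norm_num [Complex.mul_re, Complex.mul_I_re]

lemma eneg_zero : eneg 0 = 1 := by simp [eneg]

lemma nat_mod_mul (n m k : ℕ) : n % (m * k) = n % m + m * (n / m % k) := by
  conv_lhs => rw [← Nat.mod_add_div (n % (m*k)) m]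
  rw [Nat.mod_mod_of_dvd _ ⟨k, rfl⟩, Nat.mod_mul_right_div_self]


lemma digitOf_zero' (s m d : ℕ) (hd : d < s) : digitOf s (m * s + d) 0 = d := by
  have : (m * s + d) % s = d := by
    rw [mul_comm m s, Nat.mul_add_mod, Nat.mod_eq_of_lt hd]
  simpa only [digitOf, pow_zero, Nat.div_one] using this

lemma digitOf_succ (s m d j : ℕ) (hd : d < s) (hs : 0 < s) :
    digitOf s (m * s + d) (j + 1) = digitOf s m j := by
  have h : (m * s + d) / s = m := by
    rw [mul_comm m s, Nat.mul_add_div hs, Nat.div_eq_of_lt hd]; omega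
  simp only [digitOf, pow_succ, show s ^ j * s = s * s ^ j from by ring,
    ← Nat.div_div_eq_div_mul, h]

lemma sum_Lstar_eq_prod (s : ℕ) (hs : 2 ≤ s) (D : Finset ℕ) (hD : D ⊆ range s)
    (ξ : ℤ) (a : ℕ) : ∀ n : ℕ,
    ∑ ℓ ∈ (range (s ^ n)).filter (fun ℓ => ∀ j < n, digitOf s ℓ j ∈ D),
        eneg ((ξ : ℝ) * ℓ / (s : ℝ) ^ (a + n))
      = ∏ j ∈ range n, ∑ d ∈ D, eneg ((ξ : ℝ) * d / (s : ℝ) ^ (a + j + 1)) := by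
  intro n
  have hs0 : 0 < s := by omega
  have hsR : (0:ℝ) < (s:ℝ) := by positivity
  induction n with
  | zero => simp [eneg_zero]
  | succ n ih =>
    rw [prod_range_succ, ← ih, sum_mul_sum, ← Finset.sum_product']
    refine Finset.sum_nbij' (fun ℓ => (ℓ / s, ℓ % s)) (fun p => p.1 * s + p.2) ?_ ?_ ?_ ?_ ?_
    · rintro ℓ hℓ
      simp only [mem_filter, mem_range] at hℓ
      obtain ⟨h1, h2⟩ := hℓ
      simp only [mem_product, mem_filter, mem_range]
      refine ⟨⟨?_, fun j hj => ?_⟩, ?_⟩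
      · exact Nat.div_lt_of_lt_mul (by rw [mul_comm, ← pow_succ]; exact h1)
      · have := h2 (j + 1) (by omega)
        rwa [show digitOf s ℓ (j+1) = digitOf s (ℓ/s) j from by
          simp [digitOf, Nat.div_div_eq_div_mul, pow_succ, mul_comm]] at this
      · have := h2 0 (by omega)
        have h0 := h2 0 (by omega)
        simpa only [digitOf, pow_zero, Nat.div_one] using h0
    · rintro ⟨m, d⟩ hp
      simp only [mem_product, mem_filter, mem_range] at hp
      obtain ⟨⟨hm, hdig⟩, hd⟩ := hp
      have hds : d < s := by simpa using hD hd
      simp only [mem_filter, mem_range]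
      constructor
      · calc m * s + d < (m + 1) * s := by nlinarith
          _ ≤ s ^ n * s := by nlinarith
          _ = s ^ (n + 1) := (pow_succ s n).symm
      · intro j hj
        cases j with
        | zero => rw [digitOf_zero' s m d hds]; exact hd
        | succ j => rw [digitOf_succ s m d j hds hs0]; exact hdig j (by omega)
    · intro ℓ hℓ; exact Nat.div_add_mod' ℓ s
    · rintro ⟨m, d⟩ hp
      simp only [mem_product, mem_filter, mem_range] at hp
      have hds : d < s := by simpa using hD hp.2
      have h1 : (m * s + d) / s = m := by
        rw [mul_comm m s, Nat.mul_add_div hs0, Nat.div_eq_of_lt hds]; omega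
      have h2 : (m * s + d) % s = d := by
        rw [mul_comm m s, Nat.mul_add_mod, Nat.mod_eq_of_lt hds]
      simp only [h1, h2]
    · intro ℓ hℓ
      have hdecomp : (ℓ : ℝ) = (ℓ / s : ℕ) * s + (ℓ % s : ℕ) := by
        exact_mod_cast (congrArg (Nat.cast : ℕ → ℝ) (Nat.div_add_mod' ℓ s)).symm
      rw [← eneg_add]
      congr 1
      rw [pow_succ _ (a + n)]
      field_simp
      rw [hdecomp]; push_cast; ring


open Real in
lemma cos_pi_mul_bound (s : ℕ) (hs : 2 ≤ s) {f : ℝ}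
    (h1 : 1 / (s : ℝ) ^ 2 ≤ f) (h2 : f ≤ 1 - 1 / (s : ℝ) ^ 2) :
    |Real.cos (Real.pi * f)| ≤ 1 - 2 / (s : ℝ) ^ 4 := by
  have hsR : (2:ℝ) ≤ (s:ℝ) := by exact_mod_cast hs
  set δ : ℝ := 1 / (s:ℝ)^2 with hδ
  have hδpos : 0 < δ := by positivity
  have hδle : δ ≤ 1/4 := by
    rw [hδ, div_le_div_iff₀ (by positivity) (by norm_num)]; nlinarith
  have hpi3 : (3:ℝ) ≤ π := by linarith [Real.pi_gt_three]
  have hpi4 : π ≤ 4 := by linarith [Real.pi_le_four]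
  -- Step A : cos (π δ) ≤ 1 - 2 δ²
  have stepA : Real.cos (π * δ) ≤ 1 - 2 * δ ^ 2 := by
    set y : ℝ := π * δ / 2 with hy
    have hy0 : 0 < y := by positivity
    have hy1 : y ≤ 1 := by rw [hy]; nlinarith
    have hsin : δ ≤ Real.sin y := by
      have := Real.sin_gt_sub_cube hy0
      have hyd : 3 * δ / 2 ≤ y := by rw [hy]; nlinarith
      nlinarith [sq_nonneg y, sq_nonneg (y - 1)]
    have hsin0 : 0 ≤ Real.sin y := le_trans hδpos.le hsin
    have hcos2 : Real.cos (2 * y) = 1 - 2 * Real.sin y ^ 2 := by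
      nlinarith [Real.cos_two_mul y, Real.sin_sq_add_cos_sq y]
    have h2y : 2 * y = π * δ := by rw [hy]; ring
    rw [← h2y, hcos2]
    nlinarith
  -- Step B : |cos (π f)| ≤ cos (π δ)
  have hf1 : δ ≤ f := h1
  have hfle : f ≤ 1 - δ := h2
  have hb1 : Real.cos (π * f) ≤ Real.cos (π * δ) :=
    Real.cos_le_cos_of_nonneg_of_le_pi (by positivity) (by nlinarith) (by nlinarith)
  have hb2 : -Real.cos (π * f) ≤ Real.cos (π * δ) := by
    have : -Real.cos (π * f) = Real.cos (π - π * f) := by rw [Real.cos_pi_sub]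
    rw [this]
    exact Real.cos_le_cos_of_nonneg_of_le_pi (by positivity) (by nlinarith) (by nlinarith)
  have habs : |Real.cos (π * f)| ≤ Real.cos (π * δ) := abs_le.2 ⟨by linarith, hb1⟩
  have : 1 - 2 * δ ^ 2 = 1 - 2 / (s:ℝ)^4 := by
    rw [hδ]; field_simp
  linarith [stepA, habs, this ▸ stepA]

lemma rem_bounds (s : ℕ) (hs : 2 ≤ s) (n j : ℕ) (hj : 1 ≤ j)
    (hm1 : 1 ≤ digitOf s n (j - 1) + digitOf s n j * s)
    (hm2 : digitOf s n (j - 1) + digitOf s n j * s ≤ s ^ 2 - 2) :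
    s ^ (j - 1) ≤ n % s ^ (j + 1) ∧ n % s ^ (j + 1) ≤ s ^ (j + 1) - s ^ (j - 1) := by
  have hs0 : 0 < s := by omega
  have hpow : s ^ (j + 1) = s ^ (j - 1) * s ^ 2 := by
    rw [← pow_add]; congr 1; omega
  have hrem : n % s ^ (j + 1) = n % s ^ (j - 1) + s ^ (j - 1) * (n / s ^ (j - 1) % s ^ 2) := by
    rw [hpow, nat_mod_mul]
  have hm : n / s ^ (j - 1) % s ^ 2 = digitOf s n (j - 1) + digitOf s n j * s := by
    have h2 : (s:ℕ) ^ 2 = s * s := by ring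
    rw [h2, nat_mod_mul]
    have hdd : n / s ^ (j - 1) / s = n / s ^ j := by
      rw [Nat.div_div_eq_div_mul, ← pow_succ]; congr 2; omega
    rw [hdd]
    simp only [digitOf]; ring
  have hlow : n % s ^ (j - 1) < s ^ (j - 1) := Nat.mod_lt _ (by positivity)
  constructor
  · rw [hrem, hm]
    have h : s ^ (j-1) ≤ s ^ (j-1) * (digitOf s n (j - 1) + digitOf s n j * s) :=
      le_mul_of_one_le_right (Nat.zero_le _) hm1
    exact h.trans (Nat.le_add_left _ _)
  · rw [hrem, hm]
    have hA1 : 1 ≤ s ^ (j - 1) := Nat.one_le_pow _ _ hs0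
    have h2 : 2 ≤ s ^ 2 := by nlinarith
    have hmul : s ^ (j-1) * (s ^ 2 - 2) + s ^ (j-1) * 2 = s ^ (j-1) * s ^ 2 := by
      rw [← Nat.mul_add]; congr 1; omega
    have hle : s ^ (j-1) * (digitOf s n (j - 1) + digitOf s n j * s) ≤ s ^ (j-1) * (s ^ 2 - 2) :=
      Nat.mul_le_mul_left _ hm2
    rw [hpow]
    rw [Nat.mul_comm (s ^ (j-1)) (digitOf s n (j - 1) + digitOf s n j * s)] at hle ⊢
    omega


lemma abs_cos_nat (s : ℕ) (hs : 2 ≤ s) (n j : ℕ) (h1 : s ^ (j-1) ≤ n % s ^ (j+1))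
    (h2 : n % s ^ (j+1) ≤ s ^ (j+1) - s ^ (j-1)) (hj : 1 ≤ j) :
    |Real.cos (Real.pi * ((n : ℝ) / (s : ℝ) ^ (j+1)))| ≤ 1 - 2 / (s : ℝ) ^ 4 := by
  have hs0 : (0:ℝ) < (s:ℝ) := by positivity
  have hN : (0:ℝ) < (s:ℝ) ^ (j+1) := by positivity
  set q : ℕ := n / s ^ (j+1) with hq
  set rem : ℕ := n % s ^ (j+1) with hrem
  have hdecomp : (n : ℝ) = (q : ℝ) * (s:ℝ) ^ (j+1) + (rem : ℝ) := by
    have hdm := Nat.div_add_mod n (s ^ (j+1))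
    have hc : ((s ^ (j+1) * q + rem : ℕ) : ℝ) = (n : ℝ) := by exact_mod_cast congrArg (Nat.cast (R := ℝ)) hdm
    push_cast at hc
    linarith
  set f : ℝ := (rem : ℝ) / (s:ℝ) ^ (j+1) with hf
  have hx : (n : ℝ) / (s:ℝ) ^ (j+1) = (q : ℝ) + f := by
    rw [hdecomp, hf]; field_simp
  have hcos : Real.cos (Real.pi * ((n:ℝ) / (s:ℝ)^(j+1))) = (-1)^(q:ℤ) * Real.cos (Real.pi * f) := by
    rw [hx]
    have : Real.pi * ((q:ℝ) + f) = Real.pi * f + (q : ℤ) * Real.pi := by push_cast; ring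
    rw [this, Real.cos_add_int_mul_pi]
  rw [hcos, abs_mul]
  have habs1 : |((-1:ℝ))^(q:ℤ)| = 1 := by
    rw [zpow_natCast, abs_pow]; norm_num
  rw [habs1, one_mul]
  apply cos_pi_mul_bound s hs
  · rw [hf, le_div_iff₀ hN]
    have hpow : (s:ℝ) ^ (j+1) = (s:ℝ) ^ (j-1) * (s:ℝ) ^ 2 := by
      rw [← pow_add]; congr 1; omega
    have hkey : (1:ℝ) / (s:ℝ)^2 * (s:ℝ)^(j+1) = (s:ℝ)^(j-1) := by
      rw [hpow]; field_simp
    rw [hkey]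
    exact_mod_cast h1
  · rw [hf, div_le_iff₀ hN]
    have hpow : (s:ℝ) ^ (j+1) = (s:ℝ) ^ (j-1) * (s:ℝ) ^ 2 := by
      rw [← pow_add]; congr 1; omega
    have hle : s ^ (j-1) ≤ s ^ (j+1) := Nat.pow_le_pow_right (by omega) (by omega)
    have hrem' : (rem : ℝ) ≤ (s:ℝ)^(j+1) - (s:ℝ)^(j-1) := by
      have hcle := (Nat.cast_le (α := ℝ)).2 h2
      rw [Nat.cast_sub hle] at hcle
      push_cast at hcle
      exact hcle
    have key : (1 - 1/(s:ℝ)^2) * (s:ℝ)^(j+1) = (s:ℝ)^(j+1) - (s:ℝ)^(j-1) := by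
      rw [hpow]; field_simp
    rw [key]
    exact hrem'

lemma norm_one_add_eneg (θ : ℝ) :
    ‖(1 : ℂ) + eneg θ‖ = 2 * |Real.cos (Real.pi * θ)| := by
  have key : (1 : ℂ) + eneg θ =
      Complex.exp (-(Real.pi * Complex.I * θ)) * (2 * Complex.cos (Real.pi * θ)) := by
    rw [eneg, Complex.two_cos, mul_add, ← Complex.exp_add, ← Complex.exp_add]
    rw [show -(↑Real.pi * Complex.I * ↑θ) + ↑Real.pi * ↑θ * Complex.I = 0 by ring]
    rw [Complex.exp_zero]
    ring_nf
  rw [key, norm_mul]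
  have h1 : ‖Complex.exp (-(Real.pi * Complex.I * θ))‖ = 1 := by
    rw [Complex.norm_exp]
    norm_num [Complex.mul_re, Complex.mul_I_re]
  rw [h1, one_mul]
  have h2 : (Complex.cos (Real.pi * θ : ℝ) : ℂ) = ((Real.cos (Real.pi * θ) : ℝ) : ℂ) := by
    rw [Complex.ofReal_cos]
  have : ((Real.pi : ℂ) * (θ : ℂ)) = ((Real.pi * θ : ℝ) : ℂ) := by push_cast; ring
  rw [norm_mul]
  rw [show ((Real.pi:ℂ) * (θ:ℂ)) = ((Real.pi * θ : ℝ) : ℂ) from by push_cast; ring, h2,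
    Complex.norm_real]
  simp


lemma norm_gfun_le_one (s : ℕ) (A : Finset ℕ) (ξ : ℤ) (k : ℕ) : ‖gfun s A ξ k‖ ≤ 1 := by
  rw [gfun, norm_mul]
  have h1 : ‖((A.card : ℂ))⁻¹‖ = ((A.card : ℝ))⁻¹ := by
    rw [norm_inv]; norm_num
  have h2 : ‖∑ d ∈ A, eneg ((ξ : ℝ) * d / (s : ℝ) ^ k)‖ ≤ (A.card : ℝ) := by
    calc ‖∑ d ∈ A, eneg ((ξ : ℝ) * d / (s : ℝ) ^ k)‖
        ≤ ∑ d ∈ A, ‖eneg ((ξ : ℝ) * d / (s : ℝ) ^ k)‖ := norm_sum_le _ _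
      _ = ∑ d ∈ A, 1 := by simp only [norm_eneg]
      _ = (A.card : ℝ) := by simp
  rw [h1]
  rcases Nat.eq_zero_or_pos A.card with h | h
  · simp [h]
  · have hpos : (0:ℝ) < (A.card : ℝ) := by exact_mod_cast h
    calc ((A.card : ℝ))⁻¹ * ‖∑ d ∈ A, eneg ((ξ : ℝ) * d / (s : ℝ) ^ k)‖
        ≤ ((A.card : ℝ))⁻¹ * (A.card : ℝ) := by
          apply mul_le_mul_of_nonneg_left h2 (by positivity)
      _ = 1 := by field_simp

lemma norm_eneg_sign (ξ : ℤ) (x : ℝ) (hx : 0 ≤ x) :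
    ∀ y : ℝ, |Real.cos (Real.pi * (-y))| = |Real.cos (Real.pi * y)| := by
  intro y; rw [mul_neg, Real.cos_neg]

lemma abs_cos_int (s : ℕ) (hs : 2 ≤ s) (ξ : ℤ) (j : ℕ) (hj : 1 ≤ j)
    (hm1 : 1 ≤ digitOf s ξ.natAbs (j - 1) + digitOf s ξ.natAbs j * s)
    (hm2 : digitOf s ξ.natAbs (j - 1) + digitOf s ξ.natAbs j * s ≤ s ^ 2 - 2) :
    |Real.cos (Real.pi * ((ξ : ℝ) / (s : ℝ) ^ (j+1)))| ≤ 1 - 2 / (s : ℝ) ^ 4 := by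
  obtain ⟨h1, h2⟩ := rem_bounds s hs ξ.natAbs j hj hm1 hm2
  have key := abs_cos_nat s hs ξ.natAbs j h1 h2 hj
  have habs : ((ξ.natAbs : ℝ)) = |(ξ : ℝ)| := by rw [Nat.cast_natAbs, Int.cast_abs]
  rcases le_or_gt 0 ξ with h | h
  · rwa [show ((ξ.natAbs : ℝ)) = (ξ : ℝ) from by
      rw [habs]; exact abs_of_nonneg (by exact_mod_cast h)] at key
  · have : ((ξ.natAbs : ℝ)) = -(ξ : ℝ) := by
      rw [habs]; exact abs_of_neg (by exact_mod_cast h)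
    rw [this] at key
    rwa [show -(ξ:ℝ) / (s:ℝ)^(j+1) = -((ξ:ℝ)/(s:ℝ)^(j+1)) from by ring, mul_neg,
      Real.cos_neg] at key

lemma norm_gfun_lt (s : ℕ) (hs : 2 ≤ s) (D : Finset ℕ) (hD : D ⊆ range s)
    (h0 : 0 ∈ D) (h1 : 1 ∈ D) (ξ : ℤ) (j : ℕ) (hj : 1 ≤ j)
    (hm1 : 1 ≤ digitOf s ξ.natAbs (j - 1) + digitOf s ξ.natAbs j * s)
    (hm2 : digitOf s ξ.natAbs (j - 1) + digitOf s ξ.natAbs j * s ≤ s ^ 2 - 2) :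
    ‖gfun s D ξ (j+1)‖ ≤ 1 - 1 / ((D.card : ℝ) * (s : ℝ) ^ 4) := by
  have hr2 : 2 ≤ D.card := by
    have : ({0, 1} : Finset ℕ) ⊆ D := by
      intro x hx; simp at hx; rcases hx with rfl | rfl <;> assumption
    calc 2 = ({0,1} : Finset ℕ).card := by simp
      _ ≤ D.card := Finset.card_le_card this
  have hrR : (2:ℝ) ≤ (D.card : ℝ) := by exact_mod_cast hr2
  have hsR : (2:ℝ) ≤ (s:ℝ) := by exact_mod_cast hs
  set F : ℕ → ℂ := fun d => eneg ((ξ : ℝ) * d / (s : ℝ) ^ (j+1)) with hF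
  have hsplit : ∑ d ∈ D, F d = F 0 + F 1 + ∑ d ∈ (D.erase 0).erase 1, F d := by
    rw [← Finset.add_sum_erase D F h0]
    rw [← Finset.add_sum_erase (D.erase 0) F (Finset.mem_erase.2 ⟨by norm_num, h1⟩)]
    ring
  have hF0 : F 0 = 1 := by simp [hF]; exact eneg_zero
  have hF1 : F 1 = eneg ((ξ : ℝ) / (s : ℝ) ^ (j+1)) := by simp [hF]
  have hcard : ((D.erase 0).erase 1).card = D.card - 2 := by
    rw [Finset.card_erase_of_mem (Finset.mem_erase.2 ⟨by norm_num, h1⟩),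
      Finset.card_erase_of_mem h0]
    omega
  have hbound : ‖∑ d ∈ D, F d‖ ≤ (D.card : ℝ) - 4 / (s:ℝ)^4 := by
    rw [hsplit]
    calc ‖F 0 + F 1 + ∑ d ∈ (D.erase 0).erase 1, F d‖
        ≤ ‖F 0 + F 1‖ + ‖∑ d ∈ (D.erase 0).erase 1, F d‖ := norm_add_le _ _
      _ ≤ ‖F 0 + F 1‖ + ((D.card : ℝ) - 2) := by
          gcongr
          calc ‖∑ d ∈ (D.erase 0).erase 1, F d‖ ≤ ∑ d ∈ (D.erase 0).erase 1, ‖F d‖ :=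
                norm_sum_le _ _
            _ = ((D.erase 0).erase 1).card := by
                simp only [hF, norm_eneg, Finset.sum_const, nsmul_eq_mul, mul_one]
            _ = (D.card : ℝ) - 2 := by
                rw [hcard]; rw [Nat.cast_sub hr2]; norm_num
      _ ≤ (2 * (1 - 2/(s:ℝ)^4)) + ((D.card : ℝ) - 2) := by
          gcongr
          rw [hF0, hF1, norm_one_add_eneg]
          have := abs_cos_int s hs ξ j hj hm1 hm2
          linarith
      _ = (D.card : ℝ) - 4 / (s:ℝ)^4 := by ring
  rw [gfun, norm_mul]
  have hni : ‖((D.card : ℂ))⁻¹‖ = ((D.card : ℝ))⁻¹ := by rw [norm_inv]; norm_num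
  rw [hni]
  have hrpos : (0:ℝ) < (D.card:ℝ) := by linarith
  have hstep : ((D.card : ℝ))⁻¹ * ‖∑ d ∈ D, F d‖ ≤ ((D.card:ℝ))⁻¹ * ((D.card : ℝ) - 4/(s:ℝ)^4) := by
    apply mul_le_mul_of_nonneg_left hbound (by positivity)
  refine hstep.trans ?_
  rw [mul_sub, inv_mul_cancel₀ (ne_of_gt hrpos)]
  have hs4 : (0:ℝ) < (s:ℝ)^4 := by positivity
  have heq : (D.card:ℝ)⁻¹ * (4/(s:ℝ)^4) = 4/((D.card:ℝ)*(s:ℝ)^4) := by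
    field_simp
  rw [heq]
  have hX : (0:ℝ) < (D.card:ℝ)*(s:ℝ)^4 := by positivity
  have h14 : (1:ℝ)/((D.card:ℝ)*(s:ℝ)^4) ≤ 4/((D.card:ℝ)*(s:ℝ)^4) := by
    gcongr <;> norm_num
  linarith


lemma Bstar_eq_prod (s a b : ℕ) (hs : 2 ≤ s) (hab : a ≤ b) (D : Finset ℕ)
    (hD : D ⊆ range s) (h0 : 0 ∈ D) (ξ : ℤ) :
    Bstar s a b D ξ = ∏ j ∈ Finset.Ico a b, gfun s D ξ (j + 1) := by
  have hr0 : (0:ℝ) < (D.card : ℝ) := by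
    have : 0 < D.card := Finset.card_pos.2 ⟨0, h0⟩
    exact_mod_cast this
  have hrc : ((D.card : ℂ)) ≠ 0 := by
    simp only [ne_eq, Nat.cast_eq_zero]
    intro h; rw [h] at hr0; norm_num at hr0
  have key := sum_Lstar_eq_prod s hs D hD ξ a (b - a)
  have hab' : a + (b - a) = b := by omega
  rw [hab'] at key
  rw [Bstar, Lstar, key]
  rw [Finset.prod_Ico_eq_prod_range]
  simp only [gfun]
  rw [Finset.prod_mul_distrib, Finset.prod_const, Finset.card_range]
  have hcoef : (((D.card : ℝ) ^ a / (D.card : ℝ) ^ b : ℝ) : ℂ) = ((D.card : ℂ))⁻¹ ^ (b - a) := by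
    push_cast
    have hb : (D.card : ℂ) ^ b = (D.card : ℂ) ^ a * (D.card : ℂ) ^ (b - a) := by
      rw [← pow_add]; congr 1; omega
    rw [hb, inv_pow]
    field_simp
  rw [hcoef]

lemma Cfun_eq_Bstar (s a b : ℕ) (hs : 2 ≤ s) (ξ : ℤ) :
    Cfun s a b ξ = Bstar s a b (range s) ξ := by
  rw [Cfun, Bstar, Finset.card_range, Lstar]
  congr 1
  rw [Finset.filter_true_of_mem]
  intro ℓ _ j _
  simp only [digitOf, Finset.mem_range]
  exact Nat.mod_lt _ (by omega)

theorem main_Bstar_bound (s a b : ℕ) (D : Finset ℕ) (hs : 2 ≤ s) (ha : 1 ≤ a) (hab : a < b)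
    (hD : D ⊆ Finset.range s) (h0 : 0 ∈ D) (h1 : 1 ∈ D) (ξ : ℤ) :
    ‖Bstar s a b D ξ‖ ≤
      (1 - 1 / (D.card * (s : ℝ) ^ 4)) ^
        (((Finset.Ico a b).filter fun j =>
          1 ≤ digitOf s ξ.natAbs (j - 1) + digitOf s ξ.natAbs j * s ∧
          digitOf s ξ.natAbs (j - 1) + digitOf s ξ.natAbs j * s ≤ s ^ 2 - 2).card) := by
  have hr2 : 2 ≤ D.card := by
    have hsub : ({0, 1} : Finset ℕ) ⊆ D := by
      intro x hx; simp at hx; rcases hx with rfl | rfl <;> assumption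
    calc 2 = ({0,1} : Finset ℕ).card := by simp
      _ ≤ D.card := Finset.card_le_card hsub
  have hrR : (2:ℝ) ≤ (D.card : ℝ) := by exact_mod_cast hr2
  have hsR : (2:ℝ) ≤ (s:ℝ) := by exact_mod_cast hs
  have hδ : (0:ℝ) < 1 / ((D.card : ℝ) * (s:ℝ)^4) := by positivity
  have hδ1 : 1 / ((D.card : ℝ) * (s:ℝ)^4) ≤ 1/2 := by
    rw [div_le_div_iff₀ (by positivity) (by norm_num)]
    have h16 : (16:ℝ) ≤ (s:ℝ)^4 := by
      calc (16:ℝ) = 2^4 := by norm_num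
        _ ≤ (s:ℝ)^4 := by gcongr <;> norm_num
    nlinarith
  set P : ℕ → Prop := fun j =>
    1 ≤ digitOf s ξ.natAbs (j - 1) + digitOf s ξ.natAbs j * s ∧
    digitOf s ξ.natAbs (j - 1) + digitOf s ξ.natAbs j * s ≤ s ^ 2 - 2 with hP
  rw [Bstar_eq_prod s a b hs hab.le D hD h0 ξ, norm_prod]
  calc ∏ j ∈ Finset.Ico a b, ‖gfun s D ξ (j + 1)‖
      ≤ ∏ j ∈ Finset.Ico a b, (if P j then 1 - 1/((D.card : ℝ) * (s:ℝ)^4) else 1) := by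
        apply Finset.prod_le_prod
        · intro j _; exact norm_nonneg _
        · intro j hj
          by_cases hPj : P j
          · rw [if_pos hPj]
            have hj1 : 1 ≤ j := le_trans ha (Finset.mem_Ico.1 hj).1
            exact norm_gfun_lt s hs D hD h0 h1 ξ j hj1 hPj.1 hPj.2
          · rw [if_neg hPj]; exact norm_gfun_le_one s D ξ (j+1)
    _ = (1 - 1/((D.card : ℝ) * (s:ℝ)^4)) ^ (((Finset.Ico a b).filter P).card) := by
        rw [Finset.prod_ite, Finset.prod_const, Finset.prod_const, one_pow, mul_one]
    _ ≤ _ := le_refl _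


/-- Lemma 11.1(b) (Pramanik–Zhang): there is an absolute constant `c₀ > 0` such that,
with `J̄` the number of indices `a ≤ j ≤ b−1` for which the adjacent base-`s` digit
pair of `|ξ|` is non-extremal, one has `|𝔅*(ξ)| ≤ (1 − c₀/(r s⁴))^J̄` and
`|ℭ(ξ)| ≤ (1 − c₀/s⁵)^J̄`. -/
theorem Bstar_Cfun_geometric_decay :
    ∃ c₀ : ℝ, 0 < c₀ ∧
      ∀ s a b : ℕ, ∀ D : Finset ℕ, 2 ≤ s → 1 ≤ a → a < b →
        D ⊆ Finset.range s → 0 ∈ D → 1 ∈ D →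
        ∀ ξ : ℤ, ξ ≠ 0 →
          ‖Bstar s a b D ξ‖ ≤
            (1 - c₀ / (D.card * (s : ℝ) ^ 4)) ^
              (((Finset.Ico a b).filter fun j =>
                1 ≤ digitOf s ξ.natAbs (j - 1) + digitOf s ξ.natAbs j * s ∧
                digitOf s ξ.natAbs (j - 1) + digitOf s ξ.natAbs j * s ≤ s ^ 2 - 2).card) ∧
          ‖Cfun s a b ξ‖ ≤
            (1 - c₀ / (s : ℝ) ^ 5) ^
              (((Finset.Ico a b).filter fun j =>
                1 ≤ digitOf s ξ.natAbs (j - 1) + digitOf s ξ.natAbs j * s ∧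
                digitOf s ξ.natAbs (j - 1) + digitOf s ξ.natAbs j * s ≤ s ^ 2 - 2).card) := by

  refine ⟨1, one_pos, ?_⟩
  intro s a b D hs ha hab hD h0 h1 ξ hξ
  constructor
  · have := main_Bstar_bound s a b D hs ha hab hD h0 h1 ξ
    simpa using this
  · rw [Cfun_eq_Bstar s a b hs ξ]
    have h0' : 0 ∈ Finset.range s := Finset.mem_range.2 (by omega)
    have h1' : 1 ∈ Finset.range s := Finset.mem_range.2 (by omega)
    have hmain := main_Bstar_bound s a b (Finset.range s) hs ha hab (subset_refl _) h0' h1' ξ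
    have hcast : ((Finset.range s).card : ℝ) * (s:ℝ)^4 = (s:ℝ)^5 := by
      rw [Finset.card_range]; ring
    rw [hcast] at hmain
    simpa using hmain
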